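/- For a finite connected weighted graph subset Ω of an infinite graph with at least 2 vertices, the smallest and largest Dirichlet eigenvalues satisfy λ₁(Ω) + λ_max(Ω) ≤ 2 - 2·min_{x∈Ω} μ_{xx}/μ(x) ≤ 2. -/

import Mathlib

open Finset

variable {V : Type*}

noncomputable def deg (μ : V → V → ℝ) (x : V) : ℝ := ∑ᶠ y, μ x y

noncomputable def eSum (μ : V → V → ℝ) (A B : Finset V) : ℝ :=
  ∑ x ∈ A, ∑ y ∈ B, μ x y

noncomputable def vol (μ : V → V → ℝ) (U : Finset V) : ℝ := ∑ x ∈ U, deg μ x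

noncomputable def bdry (μ : V → V → ℝ) (U : Finset V) : ℝ := vol μ U - eSum μ U U

noncomputable def cheeger (μ : V → V → ℝ) (Ω : Finset V) : ℝ :=
  sInf {r : ℝ | ∃ U : Finset V, U.Nonempty ∧ U ⊆ Ω ∧ r = bdry μ U / vol μ U}

noncomputable def dualCheeger (μ : V → V → ℝ) (Ω : Finset V) : ℝ :=
  sSup {r : ℝ | ∃ V₁ V₂ : Finset V, V₁.Nonempty ∧ V₂.Nonempty ∧ Disjoint V₁ V₂ ∧
    V₁ ⊆ Ω ∧ V₂ ⊆ Ω ∧ r = 2 * eSum μ V₁ V₂ / (vol μ V₁ + vol μ V₂)}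

noncomputable def dLap (μ : V → V → ℝ) (Ω : Finset V) (f : V → ℝ) (x : V) : ℝ :=
  f x - (1 / deg μ x) * ∑ y ∈ Ω, μ x y * f y

def IsDirEigfun (μ : V → V → ℝ) (Ω : Finset V) (lam : ℝ) (f : V → ℝ) : Prop :=
  (∃ x ∈ Ω, f x ≠ 0) ∧ (∀ x ∉ Ω, f x = 0) ∧ ∀ x ∈ Ω, dLap μ Ω f x = lam * f x

def IsDirEig (μ : V → V → ℝ) (Ω : Finset V) (lam : ℝ) : Prop :=
  ∃ f : V → ℝ, IsDirEigfun μ Ω lam f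

noncomputable def lam1 (μ : V → V → ℝ) (Ω : Finset V) : ℝ :=
  sInf {l : ℝ | IsDirEig μ Ω l}

noncomputable def lamMax (μ : V → V → ℝ) (Ω : Finset V) : ℝ :=
  sSup {l : ℝ | IsDirEig μ Ω l}

def ConnectedOn (μ : V → V → ℝ) (Ω : Finset V) : Prop :=
  ∀ x ∈ Ω, ∀ y ∈ Ω,
    Relation.ReflTransGen (fun a b => a ∈ Ω ∧ b ∈ Ω ∧ μ a b ≠ 0) x y

def BipartiteOn (μ : V → V → ℝ) (Ω : Finset V) : Prop :=
  ∃ U₁ U₂ : Finset V, Disjoint U₁ U₂ ∧ (U₁ : Set V) ∪ ↑U₂ = ↑Ω ∧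
    (∀ x ∈ U₁, ∀ y ∈ U₁, μ x y = 0) ∧ (∀ x ∈ U₂, ∀ y ∈ U₂, μ x y = 0)

namespace StmtAux

noncomputable def bb (μ : V → V → ℝ) (x y : V) : ℝ :=
  μ x y / (Real.sqrt (deg μ x) * Real.sqrt (deg μ y))

noncomputable def Bop (μ : V → V → ℝ) (Ω : Finset V) :
    EuclideanSpace ℝ ↥Ω →ₗ[ℝ] EuclideanSpace ℝ ↥Ω where
  toFun g := WithLp.toLp 2 (fun x => ∑ y : ↥Ω, bb μ (x : V) (y : V) * g y)
  map_add' g h := by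
    ext x
    simp [Finset.sum_add_distrib, mul_add]
  map_smul' c g := by
    ext x
    simp [Finset.mul_sum]
    exact Finset.sum_congr rfl fun y _ => by ring

lemma Bop_apply (μ : V → V → ℝ) (Ω : Finset V) (g : EuclideanSpace ℝ ↥Ω) (x : ↥Ω) :
    Bop μ Ω g x = ∑ y : ↥Ω, bb μ (x : V) (y : V) * g y := rfl

lemma inner_eq {Ω : Finset V} (g h : EuclideanSpace ℝ ↥Ω) :
    (inner ℝ g h : ℝ) = ∑ x : ↥Ω, g x * h x := by
  simp [PiLp.inner_apply, RCLike.inner_apply, conj_trivial, mul_comm]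

lemma bb_symm (μ : V → V → ℝ) (hsymm : ∀ x y, μ x y = μ y x) (x y : V) :
    bb μ x y = bb μ y x := by
  unfold bb; rw [hsymm, mul_comm]

lemma bb_nonneg (μ : V → V → ℝ) (hnn : ∀ x y, 0 ≤ μ x y) (x y : V) : 0 ≤ bb μ x y :=
  div_nonneg (hnn x y) (by positivity)

lemma Bsymm (μ : V → V → ℝ) (Ω : Finset V) (hsymm : ∀ x y, μ x y = μ y x) :
    (Bop μ Ω).IsSymmetric := by
  intro g h
  rw [inner_eq, inner_eq]
  calc ∑ x : ↥Ω, (Bop μ Ω g x) * h x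
      = ∑ x : ↥Ω, ∑ y : ↥Ω, bb μ (x : V) (y : V) * g y * h x := by
        exact Finset.sum_congr rfl fun x _ => by rw [Bop_apply, Finset.sum_mul]
    _ = ∑ y : ↥Ω, ∑ x : ↥Ω, bb μ (x : V) (y : V) * g y * h x := Finset.sum_comm
    _ = ∑ y : ↥Ω, g y * (Bop μ Ω h y) := by
        refine Finset.sum_congr rfl fun y _ => ?_
        rw [Bop_apply, Finset.mul_sum]
        exact Finset.sum_congr rfl fun x _ => by rw [bb_symm μ hsymm]; ring

lemma sum_le_deg (μ : V → V → ℝ) (Ω : Finset V) (hnn : ∀ x y, 0 ≤ μ x y)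
    (hfin : ∀ x : V, (Function.support (μ x)).Finite) (x : V) :
    ∑ y ∈ Ω, μ x y ≤ deg μ x := by
  classical
  have h1 : deg μ x = ∑ y ∈ (hfin x).toFinset ∪ Ω, μ x y := by
    apply finsum_eq_sum_of_support_subset
    intro y hy
    simp [Set.Finite.mem_toFinset, hy]
  rw [h1]
  exact Finset.sum_le_sum_of_subset_of_nonneg Finset.subset_union_right (fun y _ _ => hnn x y)

lemma eig_sum_eq (μ : V → V → ℝ) (Ω : Finset V) (hdeg : ∀ x : V, 0 < deg μ x)
    {lam : ℝ} {f : V → ℝ} (hf : ∀ x ∈ Ω, dLap μ Ω f x = lam * f x) {x : V} (hx : x ∈ Ω) :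
    ∑ y ∈ Ω, μ x y * f y = (1 - lam) * (deg μ x * f x) := by
  have h := hf x hx
  unfold dLap at h
  have hd := (hdeg x).ne'
  field_simp at h
  linarith

/-- Dirichlet eigenvalues lie in [0,2]. -/
lemma eig_mem_Icc (μ : V → V → ℝ) (Ω : Finset V) (hnn : ∀ x y, 0 ≤ μ x y)
    (hfin : ∀ x : V, (Function.support (μ x)).Finite) (hdeg : ∀ x : V, 0 < deg μ x)
    {lam : ℝ} (h : IsDirEig μ Ω lam) : 0 ≤ lam ∧ lam ≤ 2 := by
  obtain ⟨f, ⟨x₁, hx₁, hfx₁⟩, _, heig⟩ := h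
  obtain ⟨x₀, hx₀, hmax⟩ := Ω.exists_max_image (fun x => |f x|) ⟨x₁, hx₁⟩
  have hpos : 0 < |f x₀| := lt_of_lt_of_le (abs_pos.mpr hfx₁) (hmax x₁ hx₁)
  have hS := eig_sum_eq μ Ω hdeg heig hx₀
  have hb : |∑ y ∈ Ω, μ x₀ y * f y| ≤ deg μ x₀ * |f x₀| := by
    calc |∑ y ∈ Ω, μ x₀ y * f y| ≤ ∑ y ∈ Ω, |μ x₀ y * f y| := Finset.abs_sum_le_sum_abs _ _
      _ ≤ ∑ y ∈ Ω, μ x₀ y * |f x₀| := by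
          refine Finset.sum_le_sum fun y hy => ?_
          rw [abs_mul, abs_of_nonneg (hnn x₀ y)]
          exact mul_le_mul_of_nonneg_left (hmax y hy) (hnn x₀ y)
      _ = (∑ y ∈ Ω, μ x₀ y) * |f x₀| := by rw [Finset.sum_mul]
      _ ≤ deg μ x₀ * |f x₀| := by
          exact mul_le_mul_of_nonneg_right (sum_le_deg μ Ω hnn hfin x₀) (abs_nonneg _)
  rw [hS] at hb
  rw [abs_mul, abs_mul, abs_of_pos (hdeg x₀)] at hb
  have h1 : |1 - lam| ≤ 1 := by
    nlinarith [hb, mul_pos (hdeg x₀) hpos]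
  rw [abs_le] at h1
  constructor <;> linarith [h1.1, h1.2]

/-- From a Dirichlet eigenfunction to an eigenvector of `Bop`. -/
lemma dirToB (μ : V → V → ℝ) (Ω : Finset V) (hdeg : ∀ x : V, 0 < deg μ x)
    {lam : ℝ} {f : V → ℝ} (hf : IsDirEigfun μ Ω lam f) :
    ∃ g : EuclideanSpace ℝ ↥Ω, g ≠ 0 ∧ Bop μ Ω g = (1 - lam) • g := by
  obtain ⟨⟨x₁, hx₁, hfx₁⟩, _, heig⟩ := hf
  set g : EuclideanSpace ℝ ↥Ω := WithLp.toLp 2 (fun x => Real.sqrt (deg μ (x : V)) * f (x : V)) with hg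
  have hsq : ∀ x : V, Real.sqrt (deg μ x) ≠ 0 := fun x => (Real.sqrt_pos.mpr (hdeg x)).ne'
  refine ⟨g, ?_, ?_⟩
  · intro h0
    have := congrArg (fun v : EuclideanSpace ℝ ↥Ω => v ⟨x₁, hx₁⟩) h0
    simp only [hg] at this
    exact hfx₁ (by
      have := mul_eq_zero.mp this
      rcases this with h | h
      · exact absurd h (hsq x₁)
      · exact h)
  · ext x
    have hterm : ∀ y : ↥Ω, bb μ (x : V) (y : V) * g y
        = (μ (x : V) (y : V) * f (y : V)) / Real.sqrt (deg μ (x : V)) := by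
      intro y
      simp only [hg, bb]
      have h1 := hsq (x : V)
      have h2 := hsq (y : V)
      field_simp
    have hsum : Bop μ Ω g x = (∑ y ∈ Ω, μ (x : V) y * f y) / Real.sqrt (deg μ (x : V)) := by
      rw [Bop_apply]
      rw [Finset.sum_congr rfl fun y _ => hterm y]
      rw [← Finset.sum_div]
      rw [Finset.sum_coe_sort Ω (fun y => μ (x : V) y * f y)]
    have hS := eig_sum_eq μ Ω hdeg heig x.2
    have hd : deg μ (x : V) = Real.sqrt (deg μ (x : V)) * Real.sqrt (deg μ (x : V)) :=
      (Real.mul_self_sqrt (hdeg _).le).symm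
    have : ((1 - lam) • g) x = (1 - lam) * (Real.sqrt (deg μ (x : V)) * f (x : V)) := rfl
    rw [this, hsum, hS]
    set s := Real.sqrt (deg μ (x : V)) with hs
    have hs0 : s ≠ 0 := hsq _
    have hd2 : deg μ (x : V) = s * s := (Real.mul_self_sqrt (hdeg _).le).symm
    rw [hd2]
    field_simp

/-- From an eigenvector of `Bop` to a Dirichlet eigenvalue. -/
lemma bToDir (μ : V → V → ℝ) (Ω : Finset V) (hdeg : ∀ x : V, 0 < deg μ x)
    {ν : ℝ} {g : EuclideanSpace ℝ ↥Ω} (hg0 : g ≠ 0) (hgeq : Bop μ Ω g = ν • g) :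
    IsDirEig μ Ω (1 - ν) := by
  classical
  have hsq : ∀ x : V, Real.sqrt (deg μ x) ≠ 0 := fun x => (Real.sqrt_pos.mpr (hdeg x)).ne'
  have hex : ∃ x : ↥Ω, g x ≠ 0 := by
    by_contra h
    push_neg at h
    exact hg0 (by ext x; exact h x)
  obtain ⟨x₁, hgx₁⟩ := hex
  set f : V → ℝ := fun x => if h : x ∈ Ω then g ⟨x, h⟩ / Real.sqrt (deg μ x) else 0 with hfdef
  have hfΩ : ∀ (x : V) (hx : x ∈ Ω), f x = g ⟨x, hx⟩ / Real.sqrt (deg μ x) :=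
    fun x hx => dif_pos hx
  have hfc : ∀ x ∉ Ω, f x = 0 := fun x hx => dif_neg hx
  refine ⟨f, ⟨x₁, x₁.2, ?_⟩, hfc, ?_⟩
  · rw [hfΩ (x₁ : V) x₁.2]
    exact div_ne_zero (by simpa using hgx₁) (hsq _)
  · intro x hx
    have hsum : ∑ y ∈ Ω, μ x y * f y = Real.sqrt (deg μ x) * (ν * g ⟨x, hx⟩) := by
      rw [← Finset.sum_attach Ω (fun y => μ x y * f y)]
      have hterm : ∀ y : ↥Ω, μ x (y : V) * f (y : V)
          = Real.sqrt (deg μ x) * (bb μ x (y : V) * g y) := by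
        intro y
        rw [hfΩ (y : V) y.2]
        have h3 : g ⟨(y : V), y.2⟩ = g y := by congr
        rw [h3]
        simp only [bb]
        have h1 := hsq x
        have h2 := hsq (y : V)
        field_simp
      rw [Finset.sum_congr rfl fun y _ => hterm y, ← Finset.mul_sum]
      congr 1
      rw [← Finset.univ_eq_attach]
      have h1 : (∑ y : ↥Ω, bb μ x (y : V) * g y) = Bop μ Ω g ⟨x, hx⟩ := rfl
      rw [h1, hgeq]
      rfl
    unfold dLap
    rw [hsum, hfΩ x hx]
    set s := Real.sqrt (deg μ x) with hs
    have hs0 : s ≠ 0 := hsq x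
    have hd2 : deg μ x = s * s := (Real.mul_self_sqrt (hdeg _).le).symm
    rw [hd2]
    field_simp


lemma rayleigh_bddAbove (μ : V → V → ℝ) (Ω : Finset V) :
    BddAbove (Set.range fun x : {x : EuclideanSpace ℝ ↥Ω // x ≠ 0} =>
      RCLike.re (inner ℝ (Bop μ Ω x.1) x.1 : ℝ) / ‖(x : EuclideanSpace ℝ ↥Ω)‖ ^ 2) := by
  refine ⟨‖LinearMap.toContinuousLinearMap (Bop μ Ω)‖, ?_⟩
  rintro r ⟨x, rfl⟩
  dsimp only
  have hx : (0 : ℝ) < ‖(x : EuclideanSpace ℝ ↥Ω)‖ ^ 2 := pow_pos (norm_pos_iff.mpr x.2) 2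
  rw [RCLike.re_to_real, div_le_iff₀ hx]
  have h1 : (inner ℝ (Bop μ Ω x.1) x.1 : ℝ) ≤ ‖Bop μ Ω x.1‖ * ‖x.1‖ := real_inner_le_norm _ _
  have h2 : ‖Bop μ Ω x.1‖ ≤ ‖LinearMap.toContinuousLinearMap (Bop μ Ω)‖ * ‖x.1‖ := by
    have h3 := (LinearMap.toContinuousLinearMap (Bop μ Ω)).le_opNorm x.1
    rwa [LinearMap.coe_toContinuousLinearMap'] at h3
  have h4 : (0 : ℝ) ≤ ‖x.1‖ := norm_nonneg _
  nlinarith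

lemma eigSet_nonempty (μ : V → V → ℝ) (Ω : Finset V) (hsymm : ∀ x y, μ x y = μ y x)
    (hdeg : ∀ x : V, 0 < deg μ x) (hne : Ω.Nonempty) : ∃ lam, IsDirEig μ Ω lam := by
  classical
  haveI : Nontrivial (EuclideanSpace ℝ ↥Ω) :=
    ⟨WithLp.toLp 2 (fun _ => 1), 0, fun h => by simpa using congrArg (fun v : EuclideanSpace ℝ ↥Ω => v ⟨hne.choose, hne.choose_spec⟩) h⟩
  have hev := (Bsymm μ Ω hsymm).hasEigenvalue_iSup_of_finiteDimensional
  obtain ⟨g₀, hg₀⟩ := hev.exists_hasEigenvector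
  have heq := Module.End.mem_eigenspace_iff.mp hg₀.1
  exact ⟨_, bToDir μ Ω hdeg hg₀.2 heq⟩

lemma pairing (μ : V → V → ℝ) (Ω : Finset V) (hsymm : ∀ x y, μ x y = μ y x)
    (hnn : ∀ x y, 0 ≤ μ x y) (hdeg : ∀ x : V, 0 < deg μ x) (hne : Ω.Nonempty)
    {lam : ℝ} (h : IsDirEig μ Ω lam) :
    ∃ lam', IsDirEig μ Ω lam' ∧
      lam' ≤ 2 - 2 * (Ω.inf' hne fun x => μ x x / deg μ x) - lam := by
  classical
  obtain ⟨f, hf⟩ := h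
  obtain ⟨g, hg0, hgeq⟩ := dirToB μ Ω hdeg hf
  set m := Ω.inf' hne fun x => μ x x / deg μ x with hm
  set g' : EuclideanSpace ℝ ↥Ω := WithLp.toLp 2 (fun x => |g x|) with hg'
  have hex : ∃ x : ↥Ω, g x ≠ 0 := by
    by_contra hcon; push_neg at hcon; exact hg0 (by ext x; exact hcon x)
  obtain ⟨x₁, hx₁⟩ := hex
  have hg'0 : g' ≠ 0 := fun h0 => hx₁ (abs_eq_zero.mp (congrArg (fun v : EuclideanSpace ℝ ↥Ω => v x₁) h0))
  have hgg : (inner ℝ g g : ℝ) = ‖g‖ ^ 2 := real_inner_self_eq_norm_sq g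
  have hg'n : ‖g'‖ ^ 2 = ‖g‖ ^ 2 := by
    rw [← real_inner_self_eq_norm_sq, ← hgg, inner_eq, inner_eq]
    exact Finset.sum_congr rfl fun x _ => by
      show |g x| * |g x| = g x * g x
      exact abs_mul_abs_self _
  have hgpos : (0 : ℝ) < ‖g‖ ^ 2 := pow_pos (norm_pos_iff.mpr hg0) 2
  have hBg : (inner ℝ (Bop μ Ω g) g : ℝ) = (1 - lam) * ‖g‖ ^ 2 := by
    rw [hgeq, real_inner_smul_left, hgg]
  have hkey : 2 * m * ‖g‖ ^ 2 ≤
      (inner ℝ (Bop μ Ω g') g' : ℝ) + (inner ℝ (Bop μ Ω g) g : ℝ) := by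
    rw [inner_eq, inner_eq]
    have hsum2 : (∑ x : ↥Ω, Bop μ Ω g' x * g' x) + ∑ x : ↥Ω, Bop μ Ω g x * g x
        = ∑ x : ↥Ω, ∑ y : ↥Ω,
            (bb μ (x : V) (y : V) * g' y * g' x + bb μ (x : V) (y : V) * g y * g x) := by
      rw [← Finset.sum_add_distrib]
      refine Finset.sum_congr rfl fun x _ => ?_
      rw [Bop_apply, Bop_apply, Finset.sum_mul, Finset.sum_mul, ← Finset.sum_add_distrib]
    rw [hsum2]
    have hstep : ∀ x : ↥Ω, 2 * m * g x ^ 2 ≤ ∑ y : ↥Ω,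
        (bb μ (x : V) (y : V) * g' y * g' x + bb μ (x : V) (y : V) * g y * g x) := by
      intro x
      have hnonneg : ∀ y ∈ (Finset.univ : Finset ↥Ω), 0 ≤
          bb μ (x : V) (y : V) * g' y * g' x + bb μ (x : V) (y : V) * g y * g x := by
        intro y _
        have hb := bb_nonneg μ hnn (x : V) (y : V)
        have e1 : g' y * g' x = |g y * g x| := by
          show |g y| * |g x| = |g y * g x|
          rw [abs_mul]
        have e2 : -(g y * g x) ≤ |g y * g x| := neg_le_abs _
        nlinarith
      have hdiag : 2 * m * g x ^ 2 ≤
          bb μ (x : V) (x : V) * g' x * g' x + bb μ (x : V) (x : V) * g x * g x := by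
        have hbxx : m ≤ bb μ (x : V) (x : V) := by
          have e : bb μ (x : V) (x : V) = μ (x : V) (x : V) / deg μ (x : V) := by
            unfold bb; rw [Real.mul_self_sqrt (hdeg _).le]
          rw [e, hm]
          exact Finset.inf'_le _ x.2
        have e1 : g' x * g' x = g x * g x := by
          show |g x| * |g x| = g x * g x
          exact abs_mul_abs_self _
        have e2 : bb μ (x : V) (x : V) * g' x * g' x + bb μ (x : V) (x : V) * g x * g x
            = 2 * bb μ (x : V) (x : V) * (g x * g x) := by
          rw [mul_assoc, e1]; ring
        rw [e2]
        nlinarith [sq_nonneg (g x)]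
      exact le_trans hdiag (Finset.single_le_sum hnonneg (Finset.mem_univ x))
    calc 2 * m * ‖g‖ ^ 2 = ∑ x : ↥Ω, 2 * m * g x ^ 2 := by
          rw [← Finset.mul_sum, ← hgg, inner_eq]
          congr 1
          exact Finset.sum_congr rfl fun x _ => (pow_two (g x)).symm
      _ ≤ _ := Finset.sum_le_sum fun x _ => hstep x
  haveI : Nontrivial (EuclideanSpace ℝ ↥Ω) := nontrivial_of_ne g 0 hg0
  have hev := (Bsymm μ Ω hsymm).hasEigenvalue_iSup_of_finiteDimensional
  have hle : 2 * m - (1 - lam) ≤ ⨆ x : {x : EuclideanSpace ℝ ↥Ω // x ≠ 0},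
      RCLike.re (inner ℝ (Bop μ Ω x.1) x.1 : ℝ) / ‖(x : EuclideanSpace ℝ ↥Ω)‖ ^ 2 := by
    refine le_ciSup_of_le (rayleigh_bddAbove μ Ω) ⟨g', hg'0⟩ ?_
    show 2 * m - (1 - lam) ≤ RCLike.re (inner ℝ (Bop μ Ω g') g' : ℝ) / ‖g'‖ ^ 2
    rw [RCLike.re_to_real, hg'n, le_div_iff₀ hgpos]
    nlinarith
  obtain ⟨g₀, hg₀⟩ := hev.exists_hasEigenvector
  have heq := Module.End.mem_eigenspace_iff.mp hg₀.1
  refine ⟨_, bToDir μ Ω hdeg hg₀.2 heq, ?_⟩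
  simp only [RCLike.ofReal_real_eq_id, id_eq]
  linarith [hle]

end StmtAux

theorem stmt0 {V : Type*} [Infinite V] (μ : V → V → ℝ) (hsymm : ∀ x y, μ x y = μ y x) (hnn : ∀ x y, 0 ≤ μ x y)
    (hfin : ∀ x : V, (Function.support (μ x)).Finite) (hdeg : ∀ x : V, 0 < deg μ x)
    (hconnG : ∀ x y : V, Relation.ReflTransGen (fun a b => μ a b ≠ 0) x y)
    (Ω : Finset V) (hconn : ConnectedOn μ Ω) (hcard : 2 ≤ Ω.card) (hne : Ω.Nonempty) :
    lam1 μ Ω + lamMax μ Ω ≤ 2 - 2 * Ω.inf' hne (fun x => μ x x / deg μ x) ∧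
    2 - 2 * Ω.inf' hne (fun x => μ x x / deg μ x) ≤ 2 := by
  classical
  set m := Ω.inf' hne (fun x => μ x x / deg μ x) with hm
  have hm0 : 0 ≤ m := Finset.le_inf' hne _ fun x _ => div_nonneg (hnn x x) (hdeg x).le
  have hSne : Set.Nonempty {l : ℝ | IsDirEig μ Ω l} :=
    StmtAux.eigSet_nonempty μ Ω hsymm hdeg hne
  have hbb : BddBelow {l : ℝ | IsDirEig μ Ω l} :=
    ⟨0, fun l hl => (StmtAux.eig_mem_Icc μ Ω hnn hfin hdeg hl).1⟩
  refine ⟨?_, by linarith⟩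
  have h2 : sSup {l : ℝ | IsDirEig μ Ω l} ≤ 2 - 2 * m - sInf {l : ℝ | IsDirEig μ Ω l} := by
    apply csSup_le hSne
    intro lam hlam
    obtain ⟨lam', hlam', hle'⟩ := StmtAux.pairing μ Ω hsymm hnn hdeg hne hlam
    have h3 : sInf {l : ℝ | IsDirEig μ Ω l} ≤ lam' := csInf_le hbb hlam'
    linarith
  have e1 : lam1 μ Ω = sInf {l : ℝ | IsDirEig μ Ω l} := rfl
  have e2 : lamMax μ Ω = sSup {l : ℝ | IsDirEig μ Ω l} := rfl
  rw [e1, e2]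
  linarith
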